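/- Let $(X_t)$ solve $dX_t=\mu X_t dt + \sigma X_t^{\gamma} dB_t$, $X_0=K>0$, $\gamma\in[1/2,1)$, with absorption at $0$, and let $\tau_0$ be the absorption time, $M_t = \int_0^t\sigma(1-\gamma)e^{-(1-\gamma)\mu s}dB_s$, and $\langle M\rangle_T = \int_0^T\sigma^2(1-\gamma)^2 e^{-2(1-\gamma)\mu s}ds$. Then for every $K>0$ and $T>0$, $\mathsf{P}(\tau_0\le T) \ge \Phi\big(-K^{1-\gamma}/\sqrt{\langle M\rangle_T}\big)$, where $\Phi$ is the standard normal CDF. -/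

import Mathlib

open Real MeasureTheory ProbabilityTheory Set

private lemma pathwise_bound (γ μ σ K T : ℝ) (x b : ℝ → ℝ)
    (h1γ : 0 < 1 - γ) (hγ0 : 0 ≤ γ) (hT : 0 ≤ T)
    (hx : Continuous x) (hb : Continuous b)
    (hxpos : ∀ s, 0 ≤ s → s ≤ T → 0 < x s)
    (hSDE : ∀ t, 0 ≤ t → t ≤ T → x t ^ (1-γ) = K ^ (1-γ)
        + (∫ s in (0:ℝ)..t, ((1-γ)*μ*(x s) ^ (1-γ) - γ*(1-γ)*σ^2/2 * (x s) ^ (γ-1)))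
        + (1-γ)*σ*b t) :
    Real.exp (-(1-γ)*μ*T) * x T ^ (1-γ)
      ≤ K ^ (1-γ) + σ*(1-γ) * (Real.exp (-(1-γ)*μ*T) * b T
          + (1-γ)*μ * ∫ s in (0:ℝ)..T, Real.exp (-(1-γ)*μ*s) * b s) := by
  set g : ℝ → ℝ := fun s => (1-γ)*μ*(x s) ^ (1-γ) - γ*(1-γ)*σ^2/2 * (x s) ^ (γ-1) with hgdef
  set D : ℝ → ℝ := fun s => Real.exp (-(1-γ)*μ*s) *
      ((1-γ)*σ*((1-γ)*μ)*b s - γ*(1-γ)*σ^2/2 * (x s) ^ (γ-1)) with hDdef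
  set A : ℝ → ℝ := fun u => K ^ (1-γ) + ∫ s in (0:ℝ)..u, g s with hAdef
  have he : Continuous (fun s : ℝ => Real.exp (-(1-γ)*μ*s)) := by
    exact Real.continuous_exp.comp (continuous_const.mul continuous_id)
  set U : Set ℝ := x ⁻¹' {0}ᶜ with hUdef
  have hU : IsOpen U := (isOpen_compl_singleton).preimage hx
  have hsub : Set.Icc (0:ℝ) T ⊆ U := fun s hs => (hxpos s hs.1 hs.2).ne'
  have hxc : ∀ t ∈ U, ContinuousAt (fun s => (x s) ^ (γ-1)) t :=
    fun t ht => (hx.continuousAt).rpow_const (Or.inl ht)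
  have hx1c : Continuous (fun s => (x s) ^ (1-γ)) :=
    hx.rpow_const (fun s => Or.inr h1γ.le)
  have hgc : ∀ t ∈ U, ContinuousAt g t := fun t ht =>
    (continuousAt_const.mul hx1c.continuousAt).sub (continuousAt_const.mul (hxc t ht))
  have hDc : ∀ t ∈ U, ContinuousAt D t := fun t ht =>
    he.continuousAt.mul
      ((continuousAt_const.mul hb.continuousAt).sub (continuousAt_const.mul (hxc t ht)))
  have hgsm : ∀ t ∈ U, StronglyMeasurableAtFilter g (nhds t) volume :=
    ContinuousAt.stronglyMeasurableAtFilter hU hgc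
  have hDsm : ∀ t ∈ U, StronglyMeasurableAtFilter D (nhds t) volume :=
    ContinuousAt.stronglyMeasurableAtFilter hU hDc
  have hgint : ∀ t ∈ Set.Icc (0:ℝ) T, IntervalIntegrable g volume 0 t := by
    intro t ht
    apply ContinuousOn.intervalIntegrable
    rw [Set.uIcc_of_le ht.1]
    exact fun s hs => (hgc s (hsub ⟨hs.1, hs.2.trans ht.2⟩)).continuousWithinAt
  have hDint : ∀ t ∈ Set.Icc (0:ℝ) T, IntervalIntegrable D volume 0 t := by
    intro t ht
    apply ContinuousOn.intervalIntegrable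
    rw [Set.uIcc_of_le ht.1]
    exact fun s hs => (hDc s (hsub ⟨hs.1, hs.2.trans ht.2⟩)).continuousWithinAt
  have hA : ∀ t, 0 ≤ t → t ≤ T → A t = x t ^ (1-γ) - (1-γ)*σ*b t := by
    intro t h1 h2
    have h := hSDE t h1 h2
    simp only [hAdef]
    linarith
  have he' : ∀ t : ℝ, HasDerivAt (fun s : ℝ => Real.exp (-(1-γ)*μ*s))
      (-(1-γ)*μ * Real.exp (-(1-γ)*μ*t)) t := by
    intro t
    have h0 : HasDerivAt (fun s : ℝ => -(1-γ)*μ*s) (-(1-γ)*μ) t := by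
      simpa using (hasDerivAt_id t).const_mul (-(1-γ)*μ)
    simpa [mul_comm] using h0.exp
  have hA' : ∀ t ∈ Set.Icc (0:ℝ) T, HasDerivAt A (g t) t := by
    intro t ht
    exact (intervalIntegral.integral_hasDerivAt_right (hgint t ht)
      (hgsm t (hsub ht)) (hgc t (hsub ht))).const_add _
  have hG1' : ∀ t ∈ Set.Icc (0:ℝ) T,
      HasDerivAt (fun u => Real.exp (-(1-γ)*μ*u) * A u) (D t) t := by
    intro t ht
    have h := (he' t).mul (hA' t ht)
    refine h.congr_deriv ?_
    rw [hA t ht.1 ht.2]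
    simp only [hDdef, hgdef]
    ring
  have hG2' : ∀ t ∈ Set.Icc (0:ℝ) T,
      HasDerivAt (fun u => K ^ (1-γ) + ∫ s in (0:ℝ)..u, D s) (D t) t := by
    intro t ht
    exact (intervalIntegral.integral_hasDerivAt_right (hDint t ht)
      (hDsm t (hsub ht)) (hDc t (hsub ht))).const_add _
  have heq := eq_of_has_deriv_right_eq (f' := D) (a := 0) (b := T)
    (fun t ht => (hG1' t ⟨ht.1, ht.2.le⟩).hasDerivWithinAt)
    (fun t ht => (hG2' t ⟨ht.1, ht.2.le⟩).hasDerivWithinAt)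
    (fun t ht => (hG1' t ht).continuousAt.continuousWithinAt)
    (fun t ht => (hG2' t ht).continuousAt.continuousWithinAt)
    (by simp [hAdef])
  have hGT : Real.exp (-(1-γ)*μ*T) * A T = K ^ (1-γ) + ∫ s in (0:ℝ)..T, D s := by
    simpa using heq T ⟨hT, le_rfl⟩
  have hsplit : ∫ s in (0:ℝ)..T, D s
      = (1-γ)*σ*((1-γ)*μ) * (∫ s in (0:ℝ)..T, Real.exp (-(1-γ)*μ*s) * b s)
        - γ*(1-γ)*σ^2/2 * (∫ s in (0:ℝ)..T, Real.exp (-(1-γ)*μ*s) * (x s) ^ (γ-1)) := by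
    have e1 : IntervalIntegrable
        (fun s => (1-γ)*σ*((1-γ)*μ) * (Real.exp (-(1-γ)*μ*s) * b s)) volume 0 T :=
      (continuous_const.mul (he.mul hb)).intervalIntegrable 0 T
    have e2 : IntervalIntegrable
        (fun s => γ*(1-γ)*σ^2/2 * (Real.exp (-(1-γ)*μ*s) * (x s) ^ (γ-1))) volume 0 T := by
      apply ContinuousOn.intervalIntegrable
      rw [Set.uIcc_of_le hT]
      exact fun s hs => (continuousAt_const.mul
        (he.continuousAt.mul (hxc s (hsub hs)))).continuousWithinAt
    calc ∫ s in (0:ℝ)..T, D s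
        = ∫ s in (0:ℝ)..T, ((1-γ)*σ*((1-γ)*μ) * (Real.exp (-(1-γ)*μ*s) * b s)
            - γ*(1-γ)*σ^2/2 * (Real.exp (-(1-γ)*μ*s) * (x s) ^ (γ-1))) := by
          apply intervalIntegral.integral_congr
          intro s _
          simp only [hDdef]
          ring
      _ = _ := by
          rw [intervalIntegral.integral_sub e1 e2, intervalIntegral.integral_const_mul,
            intervalIntegral.integral_const_mul]
  have hI1 : 0 ≤ ∫ s in (0:ℝ)..T, Real.exp (-(1-γ)*μ*s) * (x s) ^ (γ-1) :=
    intervalIntegral.integral_nonneg hT (fun s hs =>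
      mul_nonneg (Real.exp_nonneg _) (Real.rpow_nonneg (hxpos s hs.1 hs.2).le _))
  have hcnn : 0 ≤ γ*(1-γ)*σ^2/2 := by
    have h1 := mul_nonneg (mul_nonneg hγ0 h1γ.le) (sq_nonneg σ)
    linarith
  have hfin : Real.exp (-(1-γ)*μ*T) * x T ^ (1-γ)
      = Real.exp (-(1-γ)*μ*T) * A T + σ*(1-γ)*(Real.exp (-(1-γ)*μ*T) * b T) := by
    rw [hA T hT le_rfl]
    ring
  rw [hfin, hGT, hsplit]
  nlinarith [mul_nonneg hcnn hI1]

theorem ruin_probability_gaussian_lower_bound {Ω : Type*} [MeasurableSpace Ω]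
    (P : Measure Ω) [IsProbabilityMeasure P]
    (μ σ γ K T : ℝ) (hσ : σ ≠ 0) (hγ : γ ∈ Set.Ico (1/2 : ℝ) 1)
    (hK : 0 < K) (hT : 0 < T)
    (B X : ℝ → Ω → ℝ) (M : ℝ → Ω → ℝ) (τ₀ : Ω → ℝ)
    (hBcont : ∀ ω, Continuous (fun t => B t ω)) (hB0 : ∀ ω, B 0 ω = 0)
    (hXcont : ∀ ω, Continuous (fun t => X t ω))
    (hXnonneg : ∀ t ω, 0 ≤ t → 0 ≤ X t ω)
    (hX0 : ∀ ω, X 0 ω = K)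
    (hτ : ∀ ω, τ₀ ω = sInf {t : ℝ | 0 ≤ t ∧ X t ω = 0})
    (habs : ∀ ω, ∀ t, τ₀ ω ≤ t → X t ω = 0)
    (hSDE : ∀ ω, ∀ t, 0 ≤ t → t < τ₀ ω →
      (X t ω) ^ (1-γ) = K ^ (1-γ)
        + (∫ s in (0:ℝ)..t,
            ((1-γ)*μ*(X s ω) ^ (1-γ) - γ*(1-γ)*σ^2/2 * (X s ω) ^ (γ-1)))
        + (1-γ)*σ*B t ω)
    (hM : ∀ ω, ∀ t,
      M t ω = σ*(1-γ) * (Real.exp (-(1-γ)*μ*t) * B t ω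
        + (1-γ)*μ * ∫ s in (0:ℝ)..t, Real.exp (-(1-γ)*μ*s) * B s ω))
    (qv : ℝ) (hqv : qv = ∫ s in (0:ℝ)..T, σ^2*(1-γ)^2 * Real.exp (-2*(1-γ)*μ*s))
    (hlaw : Measure.map (fun ω => M T ω) P = gaussianReal 0 (Real.toNNReal qv)) :
    ENNReal.ofReal
        ((gaussianReal 0 1 (Set.Iic (-(K ^ (1-γ)) / Real.sqrt qv))).toReal)
      ≤ P {ω | τ₀ ω ≤ T} := by
  obtain ⟨hγhalf, hγ1⟩ := hγ
  have h1γ : 0 < 1 - γ := by linarith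
  have hγ0 : 0 ≤ γ := by linarith
  have hσ2 : 0 < σ^2 := by positivity
  have hqvpos : 0 < qv := by
    rw [hqv]
    apply intervalIntegral.intervalIntegral_pos_of_pos _ _ hT
    · exact (continuous_const.mul (Real.continuous_exp.comp
        (continuous_const.mul continuous_id))).intervalIntegrable 0 T
    · intro s
      have h2 : (0:ℝ) < (1-γ)^2 := by positivity
      have := Real.exp_pos (-2*(1-γ)*μ*s)
      positivity
  have hsq : 0 < Real.sqrt qv := Real.sqrt_pos.mpr hqvpos
  -- event inclusion
  have hincl : {ω | M T ω ≤ -(K ^ (1-γ))} ⊆ {ω | τ₀ ω ≤ T} := by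
    intro ω hω
    simp only [Set.mem_setOf_eq] at hω ⊢
    by_contra hcon
    push_neg at hcon
    have hxpos : ∀ s, 0 ≤ s → s ≤ T → 0 < X s ω := by
      intro s hs0 hsT
      rcases lt_or_eq_of_le (hXnonneg s ω hs0) with h | h
      · exact h
      · exfalso
        have hle : τ₀ ω ≤ s := by
          rw [hτ]
          exact csInf_le ⟨0, fun t ht => ht.1⟩ ⟨hs0, h.symm⟩
        linarith
    have hbd := pathwise_bound γ μ σ K T (fun s => X s ω) (fun s => B s ω)
      h1γ hγ0 hT.le (hXcont ω) (hBcont ω) hxpos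
      (fun t h0 hT' => hSDE ω t h0 (lt_of_le_of_lt hT' hcon))
    rw [← hM ω T] at hbd
    have hXT : 0 < X T ω := hxpos T hT.le le_rfl
    have hpos : 0 < Real.exp (-(1-γ)*μ*T) * X T ω ^ (1-γ) :=
      mul_pos (Real.exp_pos _) (Real.rpow_pos_of_pos hXT _)
    linarith
  -- M T is a.e. measurable
  have hMmeas : AEMeasurable (fun ω => M T ω) P := by
    by_contra h
    rw [Measure.map_of_not_aemeasurable h] at hlaw
    have h2 := congrArg (fun m : Measure ℝ => m Set.univ) hlaw
    simp at h2
  -- probability of the Gaussian event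
  have h1 : P {ω | M T ω ≤ -(K ^ (1-γ))}
      = gaussianReal 0 (Real.toNNReal qv) (Set.Iic (-(K ^ (1-γ)))) := by
    rw [← hlaw, Measure.map_apply_of_aemeasurable hMmeas measurableSet_Iic]
    rfl
  -- Gaussian scaling
  have hv : (⟨(Real.sqrt qv)^2, sq_nonneg _⟩ : NNReal) * 1 = Real.toNNReal qv := by
    apply NNReal.coe_injective
    simp [Real.sq_sqrt hqvpos.le, Real.coe_toNNReal _ hqvpos.le]
    rfl
  have hmap : gaussianReal 0 (Real.toNNReal qv)
      = (gaussianReal 0 1).map (Real.sqrt qv * ·) := by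
    rw [gaussianReal_map_const_mul (μ := 0) (v := 1) (Real.sqrt qv), mul_zero]
    exact congrArg _ hv.symm
  have hpre : (Real.sqrt qv * ·) ⁻¹' Set.Iic (-(K ^ (1-γ)))
      = Set.Iic (-(K ^ (1-γ)) / Real.sqrt qv) := by
    ext y
    simp only [Set.mem_preimage, Set.mem_Iic]
    rw [mul_comm]
    exact (le_div_iff₀ hsq).symm
  have h2 : gaussianReal 0 (Real.toNNReal qv) (Set.Iic (-(K ^ (1-γ))))
      = gaussianReal 0 1 (Set.Iic (-(K ^ (1-γ)) / Real.sqrt qv)) := by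
    rw [hmap, Measure.map_apply (measurable_const_mul _) measurableSet_Iic, hpre]
  calc ENNReal.ofReal ((gaussianReal 0 1 (Set.Iic (-(K ^ (1-γ)) / Real.sqrt qv))).toReal)
      = gaussianReal 0 1 (Set.Iic (-(K ^ (1-γ)) / Real.sqrt qv)) :=
        ENNReal.ofReal_toReal (measure_ne_top _ _)
    _ = gaussianReal 0 (Real.toNNReal qv) (Set.Iic (-(K ^ (1-γ)))) := h2.symm
    _ = P {ω | M T ω ≤ -(K ^ (1-γ))} := h1.symm
    _ ≤ P {ω | τ₀ ω ≤ T} := measure_mono hincl
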